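/- Let G be a finite connected simple graph on n ≥ 2 vertices whose resistance curvature satisfies κ_i ≥ K for all vertices i, for some K > 0. Then for all vertices y, z one has Ω_{yz} ≤ 2/(K·n). Equivalently, the maximal commute time of the simple random walk, which equals 2·|E|·Ω_{yz}, is at most (4/K)·(|E|/n). -/

import Mathlib

open Finset SimpleGraph Matrix

/-- The resistance matrix of a graph: `Ω i j = Γ⁻¹ i i + Γ⁻¹ j j - 2 Γ⁻¹ i j`
where `Γ = L + (1/n) J` with `L` the Laplacian and `J` the all-ones matrix. -/
noncomputable def resistanceMatrix {V : Type*} [Fintype V] [DecidableEq V]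
    (G : SimpleGraph V) [DecidableRel G.Adj] : Matrix V V ℝ :=
  Matrix.of fun i j =>
    letI Γinv := (G.lapMatrix ℝ + Matrix.of fun _ _ => (1 : ℝ) / Fintype.card V)⁻¹
    Γinv i i + Γinv j j - 2 * Γinv i j

section Aux

variable {V : Type*} [Fintype V] [DecidableEq V]
variable (G : SimpleGraph V) [DecidableRel G.Adj]

/-- The matrix `Γ = L + (1/n) J`. -/
noncomputable def auxGamma : Matrix V V ℝ :=
  G.lapMatrix ℝ + Matrix.of fun _ _ => (1 : ℝ) / Fintype.card V

lemma auxGamma_transpose : (auxGamma G)ᵀ = auxGamma G := by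
  unfold auxGamma
  rw [Matrix.transpose_add, (G.isSymm_lapMatrix (R := ℝ))]
  congr 1

lemma auxGamma_dot (x : V → ℝ) :
    x ⬝ᵥ (auxGamma G *ᵥ x)
      = x ⬝ᵥ (G.lapMatrix ℝ *ᵥ x) + (∑ i, x i) * (∑ i, x i) / Fintype.card V := by
  rw [auxGamma, Matrix.add_mulVec, dotProduct_add]
  congr 1
  have h1 : ∀ i : V, ((Matrix.of fun _ _ => (1 : ℝ) / Fintype.card V) *ᵥ x) i
      = (∑ j, x j) / Fintype.card V := by
    intro i
    simp only [mulVec, dotProduct, Matrix.of_apply]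
    simp only [one_div_mul_eq_div]
    rw [← Finset.sum_div]
  simp only [dotProduct, h1]
  rw [← Finset.sum_mul, mul_div_assoc]

lemma auxGamma_posDef (hconn : G.Connected) : (auxGamma G).PosDef := by
  have hne : Nonempty V := hconn.nonempty
  have hcard : (0 : ℝ) < Fintype.card V := by positivity
  refine posDef_iff_dotProduct_mulVec.mpr ⟨?_, ?_⟩
  · show (auxGamma G)ᴴ = auxGamma G
    rw [conjTranspose_eq_transpose_of_trivial, auxGamma_transpose]
  · intro x hx
    rw [star_trivial, auxGamma_dot]
    have hL : (0:ℝ) ≤ x ⬝ᵥ (G.lapMatrix ℝ *ᵥ x) := by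
      simpa using (G.posSemidef_lapMatrix ℝ).dotProduct_mulVec_nonneg x
    have hJ0 : (0:ℝ) ≤ (∑ i, x i) * (∑ i, x i) / Fintype.card V :=
      div_nonneg (mul_self_nonneg _) hcard.le
    rcases lt_or_eq_of_le (add_nonneg hL hJ0) with h | h
    · exact h
    · exfalso
      have hL0 : x ⬝ᵥ (G.lapMatrix ℝ *ᵥ x) = 0 := by linarith [le_antisymm (by linarith) hJ0]
      have hJeq : (∑ i, x i) * (∑ i, x i) / Fintype.card V = 0 := by linarith
      have hsum0 : (∑ i, x i) = 0 := by
        have := mul_self_eq_zero.mp (by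
          rcases div_eq_zero_iff.mp hJeq with h' | h'
          · exact h'
          · exact absurd h' (ne_of_gt hcard))
        exact this
      have hreach : ∀ i j : V, G.Reachable i j → x i = x j := by
        apply (G.lapMatrix_toLinearMap₂'_apply'_eq_zero_iff_forall_reachable x).mp
        rw [Matrix.toLinearMap₂'_apply']
        exact hL0
      obtain ⟨i0⟩ := hne
      have hconst : ∀ j, x j = x i0 := fun j => hreach j i0 (hconn j i0)
      have : (Fintype.card V : ℝ) * x i0 = 0 := by
        rw [← hsum0]
        rw [Finset.sum_congr rfl (fun j _ => hconst j)]
        simp [Finset.card_univ, mul_comm]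
      have hx0 : x i0 = 0 := by
        rcases mul_eq_zero.mp this with h' | h'
        · exact absurd h' (ne_of_gt hcard)
        · exact h'
      exact hx (funext fun j => by rw [hconst j, hx0]; rfl)

end Aux

section Aux2

variable {V : Type*} [Fintype V] [DecidableEq V]
variable (G : SimpleGraph V) [DecidableRel G.Adj]

lemma auxGamma_isUnit_det (hconn : G.Connected) : IsUnit (auxGamma G).det :=
  isUnit_iff_ne_zero.mpr (auxGamma_posDef G hconn).det_pos.ne'

lemma auxInv_transpose : ((auxGamma G)⁻¹)ᵀ = (auxGamma G)⁻¹ := by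
  rw [Matrix.transpose_nonsing_inv, auxGamma_transpose]

lemma auxInv_symm (i j : V) : (auxGamma G)⁻¹ i j = (auxGamma G)⁻¹ j i := by
  conv_lhs => rw [← auxInv_transpose G]
  rfl

lemma auxGamma_mulVec_ones (hne : Nonempty V) :
    auxGamma G *ᵥ (fun _ => (1:ℝ)) = fun _ => 1 := by
  have hcard : (0 : ℝ) < Fintype.card V := by positivity
  rw [auxGamma, Matrix.add_mulVec, G.lapMatrix_mulVec_const_eq_zero]
  ext i
  simp only [Pi.add_apply, Pi.zero_apply, zero_add, mulVec, dotProduct, Matrix.of_apply, mul_one]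
  rw [Finset.sum_const, nsmul_eq_mul, Finset.card_univ]
  field_simp

lemma auxInv_col_sum (hconn : G.Connected) (j : V) :
    ∑ i, (auxGamma G)⁻¹ i j = 1 := by
  have h1 : (auxGamma G)⁻¹ *ᵥ (fun _ => (1:ℝ)) = fun _ => 1 := by
    conv_lhs => rw [← auxGamma_mulVec_ones G hconn.nonempty]
    rw [Matrix.mulVec_mulVec, Matrix.nonsing_inv_mul _ (auxGamma_isUnit_det G hconn),
      Matrix.one_mulVec]
  have := congrFun h1 j
  simp only [mulVec, dotProduct, mul_one] at this
  calc ∑ i, (auxGamma G)⁻¹ i j = ∑ i, (auxGamma G)⁻¹ j i :=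
        Finset.sum_congr rfl fun i _ => auxInv_symm G i j
    _ = 1 := this

lemma lap_mulVec_auxInv (hconn : G.Connected) (j z : V) :
    G.lapMatrix ℝ *ᵥ ((auxGamma G)⁻¹ *ᵥ (Pi.single j 1 - Pi.single z 1)) =
      Pi.single j 1 - Pi.single z 1 := by
  set v : V → ℝ := Pi.single j 1 - Pi.single z 1 with hv
  set f : V → ℝ := (auxGamma G)⁻¹ *ᵥ v with hfdef
  have h1 : auxGamma G *ᵥ f = v := by
    rw [hfdef, Matrix.mulVec_mulVec, Matrix.mul_nonsing_inv _ (auxGamma_isUnit_det G hconn),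
      Matrix.one_mulVec]
  have hsum : ∑ x, f x = 0 := by
    simp only [hfdef, mulVec, dotProduct]
    rw [Finset.sum_comm]
    have : ∀ y : V, ∑ x : V, (auxGamma G)⁻¹ x y * v y = v y := by
      intro y
      rw [← Finset.sum_mul, auxInv_col_sum G hconn, one_mul]
    rw [Finset.sum_congr rfl fun y _ => this y]
    simp [hv, Pi.sub_apply, Finset.sum_sub_distrib]
  have h2 : (Matrix.of fun _ _ => (1:ℝ) / Fintype.card V : Matrix V V ℝ) *ᵥ f = 0 := by
    ext i
    simp only [mulVec, dotProduct, Matrix.of_apply, Pi.zero_apply]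
    rw [← Finset.mul_sum]
    · rw [hsum, mul_zero]
  have h3 : auxGamma G *ᵥ f
      = G.lapMatrix ℝ *ᵥ f + (Matrix.of fun _ _ => (1:ℝ) / Fintype.card V : Matrix V V ℝ) *ᵥ f := by
    rw [auxGamma, Matrix.add_mulVec]
  rw [h3, h2, add_zero] at h1
  exact h1

lemma max_principle (hconn : G.Connected) (f : V → ℝ) (j z : V)
    (hf : G.lapMatrix ℝ *ᵥ f = Pi.single j 1 - Pi.single z 1) :
    ∀ y, f y ≤ f j := by
  have hne : Nonempty V := hconn.nonempty
  obtain ⟨x, -, hx⟩ := Finset.exists_max_image Finset.univ f Finset.univ_nonempty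
  have hstep : ∀ a, f a = f x → a ≠ j → ∀ b ∈ G.neighborFinset a, f b = f x := by
    intro a ha haj
    have h1 : (G.lapMatrix ℝ *ᵥ f) a = ∑ b ∈ G.neighborFinset a, (f a - f b) := by
      rw [G.lapMatrix_mulVec_apply, Finset.sum_sub_distrib, Finset.sum_const,
        G.card_neighborFinset_eq_degree, nsmul_eq_mul]
    have h2 : (G.lapMatrix ℝ *ᵥ f) a ≤ 0 := by
      rw [hf]
      simp only [Pi.sub_apply, Pi.single_apply]
      rw [if_neg haj]
      split_ifs <;> norm_num
    have hterms : ∀ b ∈ G.neighborFinset a, 0 ≤ f a - f b := by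
      intro b _
      rw [ha]
      linarith [hx b (Finset.mem_univ b)]
    have hsum0 : ∑ b ∈ G.neighborFinset a, (f a - f b) = 0 :=
      le_antisymm (h1 ▸ h2) (Finset.sum_nonneg hterms)
    intro b hb
    have := (Finset.sum_eq_zero_iff_of_nonneg hterms).mp hsum0 b hb
    linarith
  have hwalk : ∀ a c (w : G.Walk a c), f a = f x → f j = f x ∨ f c = f x := by
    intro a c w
    induction w with
    | nil => exact fun h => Or.inr h
    | @cons u v c hadj p ih =>
      intro hu
      by_cases huj : u = j
      · exact Or.inl (huj ▸ hu)
      · exact ih (hstep u hu huj v ((G.mem_neighborFinset u v).mpr hadj))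
  obtain ⟨w⟩ := hconn x j
  have hj : f j = f x := by rcases hwalk x j w rfl with h | h <;> exact h
  intro y
  rw [hj]
  exact hx y (Finset.mem_univ y)

lemma auxInv_key (hconn : G.Connected) (y z j : V) :
    (auxGamma G)⁻¹ y j - (auxGamma G)⁻¹ y z ≤ (auxGamma G)⁻¹ j j - (auxGamma G)⁻¹ j z := by
  set f : V → ℝ := (auxGamma G)⁻¹ *ᵥ (Pi.single j 1 - Pi.single z 1) with hfdef
  have happ : ∀ a : V, f a = (auxGamma G)⁻¹ a j - (auxGamma G)⁻¹ a z := by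
    intro a
    simp [hfdef, Matrix.mulVec_sub, Matrix.mulVec_single]
  have := max_principle G hconn f j z (lap_mulVec_auxInv G hconn j z) y
  rw [happ y, happ j] at this
  exact this

lemma resistanceMatrix_eq (i j : V) :
    resistanceMatrix G i j
      = (auxGamma G)⁻¹ i i + (auxGamma G)⁻¹ j j - 2 * (auxGamma G)⁻¹ i j := rfl

lemma resistanceMatrix_symm (i j : V) :
    resistanceMatrix G i j = resistanceMatrix G j i := by
  rw [resistanceMatrix_eq, resistanceMatrix_eq, auxInv_symm G i j]
  ring

lemma resistanceMatrix_nonneg (hconn : G.Connected) (y z : V) :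
    0 ≤ resistanceMatrix G y z := by
  have h := auxInv_key G hconn z z y
  have hs := auxInv_symm G z y
  rw [resistanceMatrix_eq]
  linarith

lemma resistanceMatrix_tri (hconn : G.Connected) (y z j : V) :
    resistanceMatrix G y z ≤ resistanceMatrix G y j + resistanceMatrix G j z := by
  have h := auxInv_key G hconn y z j
  simp only [resistanceMatrix_eq]
  linarith

end Aux2

/-- Commute time upper bound: if the resistance curvature is bounded below by `K > 0`,
then `Ω y z ≤ 2/(K n)` for all vertices, i.e. every commute time `2 |E| Ω y z`
is at most `(4/K)(|E|/n)`. -/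
theorem commute_time_le_of_resistance_curvature_ge
    {V : Type*} [Fintype V] [DecidableEq V]
    (G : SimpleGraph V) [DecidableRel G.Adj]
    (hconn : G.Connected) (hn : 2 ≤ Fintype.card V)
    (κ : V → ℝ) (hκ : resistanceMatrix G *ᵥ κ = fun _ => 1)
    (K : ℝ) (hK : 0 < K) (hcurv : ∀ i, K ≤ κ i) :
    ∀ y z : V,
      resistanceMatrix G y z ≤ 2 / (K * Fintype.card V) ∧
      2 * G.edgeFinset.card * resistanceMatrix G y z ≤
        (4 / K) * (G.edgeFinset.card / (Fintype.card V : ℝ)) := by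
  intro y z
  have hcard : (0 : ℝ) < Fintype.card V := by
    have : (0:ℕ) < Fintype.card V := by omega
    exact_mod_cast this
  have hκ0 : ∀ i, 0 ≤ κ i := fun i => le_trans hK.le (hcurv i)
  have h1 : ∑ i, resistanceMatrix G y i * κ i = 1 := by
    have := congrFun hκ y
    simpa [mulVec, dotProduct] using this
  have h2 : ∑ i, resistanceMatrix G i z * κ i = 1 := by
    have := congrFun hκ z
    simp only [mulVec, dotProduct] at this
    rw [← this]
    exact Finset.sum_congr rfl fun i _ => by rw [resistanceMatrix_symm G i z]
  have hmain : resistanceMatrix G y z * ∑ i, κ i ≤ 2 := by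
    calc resistanceMatrix G y z * ∑ i, κ i = ∑ i, resistanceMatrix G y z * κ i := by
          rw [Finset.mul_sum]
      _ ≤ ∑ i, (resistanceMatrix G y i + resistanceMatrix G i z) * κ i :=
          Finset.sum_le_sum fun i _ =>
            mul_le_mul_of_nonneg_right (resistanceMatrix_tri G hconn y z i) (hκ0 i)
      _ = 2 := by
          simp_rw [add_mul]
          rw [Finset.sum_add_distrib, h1, h2]
          norm_num
  have hsumκ : K * Fintype.card V ≤ ∑ i, κ i := by
    calc K * Fintype.card V = ∑ _i : V, K := by
          rw [Finset.sum_const, nsmul_eq_mul, Finset.card_univ, mul_comm]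
      _ ≤ ∑ i, κ i := Finset.sum_le_sum fun i _ => hcurv i
  have hΩ0 : 0 ≤ resistanceMatrix G y z := resistanceMatrix_nonneg G hconn y z
  have hKn : (0:ℝ) < K * Fintype.card V := by positivity
  have hfirst : resistanceMatrix G y z ≤ 2 / (K * Fintype.card V) := by
    rw [le_div_iff₀ hKn]
    calc resistanceMatrix G y z * (K * Fintype.card V)
        ≤ resistanceMatrix G y z * ∑ i, κ i := mul_le_mul_of_nonneg_left hsumκ hΩ0
      _ ≤ 2 := hmain
  refine ⟨hfirst, ?_⟩
  have hE : (0:ℝ) ≤ 2 * G.edgeFinset.card := by positivity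
  calc 2 * (G.edgeFinset.card : ℝ) * resistanceMatrix G y z
      ≤ 2 * G.edgeFinset.card * (2 / (K * Fintype.card V)) :=
        mul_le_mul_of_nonneg_left hfirst hE
    _ = (4 / K) * (G.edgeFinset.card / (Fintype.card V : ℝ)) := by
        field_simp
        ring
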